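/- For every integer r ≥ 3 there exists C_r > 0 such that for every θ ∈ (0,1], every integer L₁ ≥ 1 with θL₁ ≥ 1, and every q ∈ ℝ: (1/(θL₁)) Σ_{j=0}^{L₁−1} (1 + (|2πj/L₁|_T/θ)^r)^{-1} (1 + (|2πj/L₁ − q|_T/θ)^r)^{-1} ≤ C_r (θ/(θ + |q|_T))^{r/2}. -/

import Mathlib

noncomputable section

/-- The distance on the torus of length `2π`: `|x|_T = min_{n ∈ ℤ} |x + 2πn|`. -/
def torusDist (x : ℝ) : ℝ := ⨅ n : ℤ, |x + n * (2 * Real.pi)|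

lemma torusBdd (x : ℝ) : BddBelow (Set.range fun n : ℤ => |x + n * (2 * Real.pi)|) :=
  ⟨0, by rintro y ⟨n, rfl⟩; positivity⟩

lemma torusDist_nonneg (x : ℝ) : 0 ≤ torusDist x :=
  le_ciInf fun _ => abs_nonneg _

lemma torusDist_le (x : ℝ) (n : ℤ) : torusDist x ≤ |x + n * (2 * Real.pi)| :=
  ciInf_le (torusBdd x) n

lemma torusDist_le_pi (x : ℝ) : torusDist x ≤ Real.pi := by
  have h := torusDist_le x (-round (x / (2 * Real.pi)))
  have h2 : |x / (2 * Real.pi) - round (x / (2 * Real.pi))| ≤ 1 / 2 := abs_sub_round _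
  have hpi : (0:ℝ) < 2 * Real.pi := by positivity
  have key : x + ((-round (x / (2 * Real.pi)) : ℤ) : ℝ) * (2 * Real.pi)
      = (x / (2 * Real.pi) - round (x / (2 * Real.pi))) * (2 * Real.pi) := by
    push_cast; field_simp; ring
  rw [key, abs_mul, abs_of_pos hpi] at h
  nlinarith
lemma torusDist_triangle (x q : ℝ) : torusDist q ≤ torusDist x + torusDist (x - q) := by
  rw [← sub_le_iff_le_add']
  refine le_ciInf fun m => ?_
  rw [sub_le_iff_le_add', ← sub_le_iff_le_add]
  refine le_ciInf fun n => ?_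
  rw [sub_le_iff_le_add]
  calc torusDist q ≤ |q + ((n - m : ℤ) : ℝ) * (2 * Real.pi)| := torusDist_le q (n - m)
    _ = |(x + n * (2 * Real.pi)) - (x - q + m * (2 * Real.pi))| := by push_cast; ring_nf
    _ ≤ |x + n * (2 * Real.pi)| + |x - q + m * (2 * Real.pi)| := abs_sub _ _

lemma torus_count (L₁ : ℕ) (hL : 1 ≤ L₁) (c s : ℝ) (hs : 0 ≤ s) :
    ((Finset.filter
        (fun j : ℕ => torusDist (2 * Real.pi * (j:ℝ) / (L₁:ℝ) - c) < s) (Finset.range L₁)).card : ℝ)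
      ≤ s * (L₁:ℝ) / Real.pi + 1 := by
  have hpi : (0:ℝ) < 2 * Real.pi := by positivity
  have hL0 : (0:ℝ) < (L₁:ℝ) := by exact_mod_cast hL
  set a : ℝ := c * L₁ / (2 * Real.pi) with ha
  set ρ : ℝ := s * L₁ / (2 * Real.pi) with hρ
  have hρ0 : 0 ≤ ρ := by positivity
  have hmem : ∀ j ∈ Finset.filter
      (fun j : ℕ => torusDist (2 * Real.pi * (j:ℝ) / (L₁:ℝ) - c) < s) (Finset.range L₁),
      ∃ n : ℤ, |((j:ℝ) + n * L₁ - a)| < ρ := by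
    intro j hj
    rw [Finset.mem_filter] at hj
    obtain ⟨n, hn⟩ := exists_lt_of_ciInf_lt hj.2
    refine ⟨n, ?_⟩
    have key : (j:ℝ) + n * L₁ - a
        = (2 * Real.pi * (j:ℝ) / (L₁:ℝ) - c + n * (2 * Real.pi)) * ((L₁:ℝ) / (2 * Real.pi)) := by
      rw [ha]
      field_simp
      ring
    rw [key, abs_mul,
      abs_of_pos (show (0:ℝ) < (L₁:ℝ) / (2 * Real.pi) by positivity)]
    calc _ < s * ((L₁:ℝ) / (2 * Real.pi)) :=
          mul_lt_mul_of_pos_right hn (by positivity)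
      _ = ρ := by rw [hρ]; ring
  classical
  set f : ℕ → ℤ := fun j =>
    if h : ∃ n : ℤ, |((j:ℝ) + n * L₁ - a)| < ρ then (j:ℤ) + h.choose * L₁ else 0 with hf
  have hcard : (Finset.filter
      (fun j : ℕ => torusDist (2 * Real.pi * (j:ℝ) / (L₁:ℝ) - c) < s) (Finset.range L₁)).card
      ≤ (Finset.Icc ⌈a - ρ⌉ ⌊a + ρ⌋).card := by
    apply Finset.card_le_card_of_injOn f
    · intro j hj
      have hex := hmem j hj
      rw [hf]; simp only [hex, dif_pos]
      have hch := hex.choose_spec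
      rw [abs_lt] at hch
      rw [Finset.mem_coe, Finset.mem_Icc]
      constructor
      · rw [Int.ceil_le]; push_cast; linarith
      · rw [Int.le_floor]; push_cast; linarith
    · intro j hj j' hj' heq
      have hexj := hmem j hj
      have hexj' := hmem j' hj'
      rw [hf] at heq; simp only [hexj, hexj', dif_pos] at heq
      have hj1 : j < L₁ := Finset.mem_range.1 (Finset.mem_filter.1 hj).1
      have hj2 : j' < L₁ := Finset.mem_range.1 (Finset.mem_filter.1 hj').1
      have hdvd : (L₁:ℤ) ∣ (j:ℤ) - (j':ℤ) :=
        ⟨hexj'.choose - hexj.choose, by linear_combination heq⟩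
      have habs : |(j:ℤ) - (j':ℤ)| < (L₁:ℤ) := by rw [abs_lt]; omega
      have := Int.eq_zero_of_abs_lt_dvd hdvd habs
      omega
  have hfin : ((Finset.Icc ⌈a - ρ⌉ ⌊a + ρ⌋).card : ℝ) ≤ 2 * ρ + 1 := by
    rw [Int.card_Icc]
    have h1 : ((⌈a - ρ⌉:ℝ)) ≥ a - ρ := Int.le_ceil _
    have h2 : ((⌊a + ρ⌋:ℝ)) ≤ a + ρ := Int.floor_le _
    have h3 : ⌈a - ρ⌉ ≤ ⌊a + ρ⌋ + 1 :=
      le_trans (Int.ceil_mono (by linarith)) (Int.ceil_le_floor_add_one _)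
    have h4 : (((⌊a + ρ⌋ + 1 - ⌈a - ρ⌉).toNat : ℤ) : ℝ)
        = ((⌊a + ρ⌋ + 1 - ⌈a - ρ⌉ : ℤ) : ℝ) := by
      rw [Int.toNat_of_nonneg (by omega)]
    push_cast at h4 ⊢
    rw [h4]
    push_cast
    linarith
  calc ((Finset.filter
      (fun j : ℕ => torusDist (2 * Real.pi * (j:ℝ) / (L₁:ℝ) - c) < s) (Finset.range L₁)).card : ℝ)
      ≤ ((Finset.Icc ⌈a - ρ⌉ ⌊a + ρ⌋).card : ℝ) := by exact_mod_cast hcard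
    _ ≤ 2 * ρ + 1 := hfin
    _ = s * (L₁:ℝ) / Real.pi + 1 := by rw [hρ]; field_simp

lemma sqrt_two_pow (m : ℕ) : Real.sqrt (2 ^ m) = Real.sqrt 2 ^ m := by
  have h : ((Real.sqrt 2) ^ m) ^ 2 = 2 ^ m := by
    rw [← pow_mul, mul_comm, pow_mul, Real.sq_sqrt (by norm_num)]
  rw [← h, Real.sqrt_sq (by positivity)]

lemma geo_bound (ρ : ℝ) (h0 : 0 ≤ ρ) (h1 : ρ < 1) (n : ℕ) :
    ∑ k ∈ Finset.range n, ρ ^ k ≤ (1 - ρ)⁻¹ := by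
  rw [geom_sum_eq h1.ne]
  have h2 : 0 ≤ ρ ^ n := pow_nonneg h0 n
  rw [div_le_iff_of_neg (by linarith : ρ - 1 < 0)]
  have key : (1 - ρ)⁻¹ * (ρ - 1) = -1 := by
    field_simp
    rw [div_eq_iff (by linarith : (1:ℝ) - ρ ≠ 0)]; ring
  linarith

lemma sum_bump (r : ℕ) (hr : 3 ≤ r) (θ : ℝ) (L₁ : ℕ) (hθ : 0 < θ) (hθ1 : θ ≤ 1)
    (hL : 1 ≤ L₁) (hθL : 1 ≤ θ * (L₁:ℝ)) (c : ℝ) :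
    ∑ j ∈ Finset.range L₁,
      (Real.sqrt (1 + (torusDist (2 * Real.pi * (j:ℝ) / (L₁:ℝ) - c) / θ) ^ r))⁻¹
      ≤ 12 * (θ * (L₁:ℝ)) := by
  classical
  set D : ℕ → ℝ := fun j => torusDist (2 * Real.pi * (j:ℝ) / (L₁:ℝ) - c) with hD
  set g : ℕ → ℝ := fun j => (Real.sqrt (1 + (D j / θ) ^ r))⁻¹ with hg
  set M : ℕ := L₁ + 2 with hM
  set w : ℕ → ℝ := fun k => ((Real.sqrt 2) ^ (k * r))⁻¹ with hw
  have hw0 : ∀ k, 0 ≤ w k := fun k => by rw [hw]; positivity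
  set F : ℕ → ℕ → ℝ := fun j k => if D j < 2 ^ (k + 1) * θ then w k else 0 with hF
  have hL0 : (0:ℝ) < (L₁:ℝ) := by exact_mod_cast hL
  -- pointwise bound
  have point : ∀ j ∈ Finset.range L₁, g j ≤ ∑ k ∈ Finset.range (M + 1), F j k := by
    intro j _
    have hD0 : 0 ≤ D j := torusDist_nonneg _
    have hDpi : D j ≤ Real.pi := torusDist_le_pi _
    -- find k₀
    obtain ⟨k₀, hk₀M, hk₀lt, hk₀g⟩ :
        ∃ k₀, k₀ ∈ Finset.range (M + 1) ∧ D j < 2 ^ (k₀ + 1) * θ ∧ g j ≤ w k₀ := by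
      by_cases hcase : D j < 2 * θ
      · refine ⟨0, by simp, by simpa using hcase, ?_⟩
        rw [hg, hw]
        simp only [zero_mul, pow_zero, inv_one]
        rw [inv_le_one_iff₀]
        right
        calc (1:ℝ) = Real.sqrt 1 := Real.sqrt_one.symm
          _ ≤ Real.sqrt (1 + (D j / θ) ^ r) := by
              apply Real.sqrt_le_sqrt
              have : 0 ≤ (D j / θ) ^ r := by positivity
              linarith
      · push_neg at hcase
        set t : ℝ := D j / θ with ht
        have ht2 : 2 ≤ t := by rw [ht, le_div_iff₀ hθ]; linarith
        have ht0 : 0 ≤ t := by linarith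
        set k₀ : ℕ := Nat.log 2 ⌊t⌋₊ with hk₀
        have hfl2 : 2 ≤ ⌊t⌋₊ := Nat.le_floor (by exact_mod_cast ht2)
        have h2k : (2:ℝ) ^ k₀ ≤ t := by
          calc (2:ℝ) ^ k₀ ≤ (⌊t⌋₊ : ℝ) := by
                exact_mod_cast Nat.pow_log_le_self 2 (by omega)
            _ ≤ t := Nat.floor_le ht0
        have htk : t < 2 ^ (k₀ + 1) := by
          have h1 : ⌊t⌋₊ < 2 ^ (k₀ + 1) := Nat.lt_pow_succ_log_self (by norm_num) _
          calc t < (⌊t⌋₊:ℝ) + 1 := Nat.lt_floor_add_one t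
            _ ≤ 2 ^ (k₀ + 1) := by exact_mod_cast Nat.succ_le_of_lt h1
        have hkM : k₀ ≤ M := by
          have hπ4 : Real.pi ≤ 4 := by linarith [Real.pi_le_four]
          have h2 : (2:ℝ) ^ k₀ ≤ 4 * L₁ := by
            have hinv : 1 / θ ≤ (L₁:ℝ) := by rw [div_le_iff₀ hθ] at *; nlinarith
            have : t ≤ Real.pi / θ := by
              rw [ht, div_le_div_iff₀ hθ hθ]; nlinarith
            have : t ≤ 4 * L₁ := by
              calc t ≤ Real.pi / θ := this
                _ = Real.pi * (1 / θ) := by ring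
                _ ≤ 4 * L₁ := by nlinarith [Real.pi_pos]
            linarith
          have h3 : (2:ℝ) ^ k₀ < 2 ^ (M + 1) := by
            calc (2:ℝ) ^ k₀ ≤ 4 * L₁ := h2
              _ < 4 * 2 ^ L₁ := by
                  have := @Nat.lt_two_pow_self L₁
                  have : (L₁:ℝ) < 2 ^ L₁ := by exact_mod_cast this
                  linarith
              _ = 2 ^ (L₁ + 2) := by ring
              _ < 2 ^ (M + 1) := by
                  apply pow_lt_pow_right₀ (by norm_num)
                  omega
          have := (pow_lt_pow_iff_right₀ (by norm_num : (1:ℝ) < 2)).1 h3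
          omega
        refine ⟨k₀, Finset.mem_range.2 (by omega), ?_, ?_⟩
        · rw [show D j = t * θ by rw [ht]; field_simp]
          calc t * θ < 2 ^ (k₀ + 1) * θ := by nlinarith
            _ = 2 ^ (k₀ + 1) * θ := rfl
        · rw [hg, hw]
          apply inv_anti₀ (by positivity)
          calc Real.sqrt 2 ^ (k₀ * r) = Real.sqrt (2 ^ (k₀ * r)) := (sqrt_two_pow _).symm
            _ ≤ Real.sqrt (1 + (D j / θ) ^ r) := by
                apply Real.sqrt_le_sqrt
                have : (2:ℝ) ^ (k₀ * r) ≤ t ^ r := by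
                  rw [pow_mul]
                  exact pow_le_pow_left₀ (by positivity) h2k r
                rw [← ht] at *
                linarith
    have hFk : F j k₀ = w k₀ := by rw [hF]; exact if_pos hk₀lt
    calc g j ≤ w k₀ := hk₀g
      _ = F j k₀ := hFk.symm
      _ ≤ ∑ k ∈ Finset.range (M + 1), F j k := by
          refine Finset.single_le_sum (fun k _ => ?_) hk₀M
          rw [hF]
          dsimp only
          split_ifs
          · exact hw0 k
          · exact le_rfl
  
  -- per-k bound
  have hs2 : (1:ℝ) < Real.sqrt 2 := by
    have h := Real.sq_sqrt (by norm_num : (0:ℝ) ≤ 2)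
    nlinarith [Real.sqrt_nonneg 2]
  have hterm : ∀ k ∈ Finset.range (M + 1),
      ∑ j ∈ Finset.range L₁, F j k ≤ 3 * (θ * (L₁:ℝ)) * ((Real.sqrt 2)⁻¹) ^ k := by
    intro k _
    have hsum : ∑ j ∈ Finset.range L₁, F j k
        = ((Finset.filter (fun j : ℕ => D j < 2 ^ (k + 1) * θ) (Finset.range L₁)).card : ℝ)
          * w k := by
      rw [hF]
      rw [Finset.sum_ite, Finset.sum_const, Finset.sum_const_zero, add_zero, nsmul_eq_mul]
    have hcount : ((Finset.filter (fun j : ℕ => D j < 2 ^ (k + 1) * θ)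
        (Finset.range L₁)).card : ℝ) ≤ 2 ^ (k + 1) * θ * (L₁:ℝ) / Real.pi + 1 := by
      simp only [hD]
      exact torus_count L₁ hL c (2 ^ (k + 1) * θ) (by positivity)
    have hpow : Real.sqrt 2 ^ (3 * k) = 2 ^ k * Real.sqrt 2 ^ k := by
      rw [show 3 * k = 2 * k + k by ring, pow_add, pow_mul,
        Real.sq_sqrt (by norm_num : (0:ℝ) ≤ 2)]
    have hwle : w k ≤ (2 ^ k * Real.sqrt 2 ^ k)⁻¹ := by
      rw [hw, ← hpow]
      apply inv_anti₀ (by positivity)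
      apply pow_le_pow_right₀ hs2.le
      nlinarith
    have hwA : w k ≤ ((Real.sqrt 2)⁻¹) ^ k := by
      refine hwle.trans ?_
      rw [inv_pow]
      apply inv_anti₀ (by positivity)
      calc Real.sqrt 2 ^ k = 1 * Real.sqrt 2 ^ k := (one_mul _).symm
        _ ≤ 2 ^ k * Real.sqrt 2 ^ k := by
            apply mul_le_mul_of_nonneg_right _ (by positivity)
            exact one_le_pow₀ (by norm_num)
    have hwB : 2 ^ (k + 1) * w k ≤ 2 * ((Real.sqrt 2)⁻¹) ^ k := by
      calc 2 ^ (k + 1) * w k ≤ 2 ^ (k + 1) * (2 ^ k * Real.sqrt 2 ^ k)⁻¹ := by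
            apply mul_le_mul_of_nonneg_left hwle (by positivity)
        _ = 2 * ((Real.sqrt 2)⁻¹) ^ k := by
            rw [pow_succ, inv_pow]
            field_simp
    have hπ1 : (1:ℝ) ≤ Real.pi := by linarith [Real.pi_gt_three]
    have hw0k := hw0 k
    calc ∑ j ∈ Finset.range L₁, F j k
        = ((Finset.filter (fun j : ℕ => D j < 2 ^ (k + 1) * θ)
            (Finset.range L₁)).card : ℝ) * w k := hsum
      _ ≤ (2 ^ (k + 1) * θ * (L₁:ℝ) / Real.pi + 1) * w k :=
          mul_le_mul_of_nonneg_right hcount hw0k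
      _ ≤ (2 ^ (k + 1) * θ * (L₁:ℝ) + θ * (L₁:ℝ)) * w k := by
          apply mul_le_mul_of_nonneg_right _ hw0k
          have h1 : 2 ^ (k + 1) * θ * (L₁:ℝ) / Real.pi ≤ 2 ^ (k + 1) * θ * (L₁:ℝ) :=
            div_le_self (by positivity) hπ1
          linarith
      _ = (θ * (L₁:ℝ)) * (2 ^ (k + 1) * w k) + (θ * (L₁:ℝ)) * w k := by ring
      _ ≤ (θ * (L₁:ℝ)) * (2 * ((Real.sqrt 2)⁻¹) ^ k)
            + (θ * (L₁:ℝ)) * ((Real.sqrt 2)⁻¹) ^ k := by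
          have hθL0 : (0:ℝ) ≤ θ * (L₁:ℝ) := by positivity
          have hB := mul_le_mul_of_nonneg_left hwB hθL0
          have hA := mul_le_mul_of_nonneg_left hwA hθL0
          linarith
      _ = 3 * (θ * (L₁:ℝ)) * ((Real.sqrt 2)⁻¹) ^ k := by ring
  have hgeo : ∑ k ∈ Finset.range (M + 1), ((Real.sqrt 2)⁻¹) ^ k
      ≤ (1 - (Real.sqrt 2)⁻¹)⁻¹ :=
    geo_bound _ (by positivity) (by rw [inv_lt_one_iff₀]; right; exact hs2) _
  have hgeo4 : (1 - (Real.sqrt 2)⁻¹)⁻¹ ≤ 4 := by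
    have h := Real.sq_sqrt (by norm_num : (0:ℝ) ≤ 2)
    have h1 : Real.sqrt 2 ≤ 3 / 2 := by nlinarith [Real.sqrt_nonneg 2]
    have h2 : (Real.sqrt 2)⁻¹ ≤ 3 / 4 := by
      rw [inv_le_comm₀ (by linarith) (by norm_num)]
      nlinarith
    have h3 : (1:ℝ) - (Real.sqrt 2)⁻¹ ≥ 1 / 4 := by linarith
    rw [inv_le_comm₀ (by linarith) (by norm_num)]
    linarith
  calc ∑ j ∈ Finset.range L₁, g j
      ≤ ∑ j ∈ Finset.range L₁, ∑ k ∈ Finset.range (M + 1), F j k :=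
        Finset.sum_le_sum point
    _ = ∑ k ∈ Finset.range (M + 1), ∑ j ∈ Finset.range L₁, F j k := Finset.sum_comm
    _ ≤ ∑ k ∈ Finset.range (M + 1), 3 * (θ * (L₁:ℝ)) * ((Real.sqrt 2)⁻¹) ^ k :=
        Finset.sum_le_sum hterm
    _ = 3 * (θ * (L₁:ℝ)) * ∑ k ∈ Finset.range (M + 1), ((Real.sqrt 2)⁻¹) ^ k := by
        rw [Finset.mul_sum]
    _ ≤ 3 * (θ * (L₁:ℝ)) * (1 - (Real.sqrt 2)⁻¹)⁻¹ :=
        mul_le_mul_of_nonneg_left hgeo (by positivity)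
    _ ≤ 12 * (θ * (L₁:ℝ)) := by nlinarith [hgeo4]

lemma helper_prod (u v w : ℝ) (hu : 1 ≤ u) (hv : 1 ≤ v) (hw : 1 ≤ w) (hwu : w ≤ u) :
    u⁻¹ * v⁻¹ ≤ (Real.sqrt w)⁻¹ * ((Real.sqrt u)⁻¹ + (Real.sqrt v)⁻¹) := by
  have hu0 : (0:ℝ) < u := by linarith
  have hv0 : (0:ℝ) < v := by linarith
  have hw0 : (0:ℝ) < w := by linarith
  have hsu : 0 < Real.sqrt u := Real.sqrt_pos.2 hu0
  have hsw : 0 < Real.sqrt w := Real.sqrt_pos.2 hw0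
  have hsv : 0 < Real.sqrt v := Real.sqrt_pos.2 hv0
  calc u⁻¹ * v⁻¹ ≤ u⁻¹ * 1 := by
        apply mul_le_mul_of_nonneg_left _ (by positivity)
        rw [inv_le_one_iff₀]; right; exact hv
    _ = (Real.sqrt u * Real.sqrt u)⁻¹ := by rw [mul_one, Real.mul_self_sqrt hu0.le]
    _ ≤ (Real.sqrt w * Real.sqrt u)⁻¹ := by
        apply inv_anti₀ (by positivity)
        exact mul_le_mul_of_nonneg_right (Real.sqrt_le_sqrt hwu) hsu.le
    _ = (Real.sqrt w)⁻¹ * (Real.sqrt u)⁻¹ := by rw [mul_inv]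
    _ ≤ (Real.sqrt w)⁻¹ * ((Real.sqrt u)⁻¹ + (Real.sqrt v)⁻¹) := by
        apply mul_le_mul_of_nonneg_left _ (by positivity)
        have : (0:ℝ) ≤ (Real.sqrt v)⁻¹ := by positivity
        linarith

lemma prod_bound (r : ℕ) (θ a b Q : ℝ) (hθ : 0 < θ) (ha : 0 ≤ a) (hb : 0 ≤ b)
    (hQ : 0 ≤ Q) (hab : Q ≤ a + b) :
    (1 + (a / θ) ^ r)⁻¹ * (1 + (b / θ) ^ r)⁻¹
      ≤ (Real.sqrt (1 + (Q / (2 * θ)) ^ r))⁻¹ *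
        ((Real.sqrt (1 + (a / θ) ^ r))⁻¹ + (Real.sqrt (1 + (b / θ) ^ r))⁻¹) := by
  have hu : 1 ≤ 1 + (a / θ) ^ r := le_add_of_nonneg_right (by positivity)
  have hv : 1 ≤ 1 + (b / θ) ^ r := le_add_of_nonneg_right (by positivity)
  have hw : 1 ≤ 1 + (Q / (2 * θ)) ^ r := by
    have : (0:ℝ) ≤ (Q / (2 * θ)) ^ r := by positivity
    linarith
  rcases le_or_gt (Q / 2) a with hca | hcb
  · have hwu : 1 + (Q / (2 * θ)) ^ r ≤ 1 + (a / θ) ^ r := by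
      have h1 : Q / (2 * θ) ≤ a / θ := by
        rw [div_le_div_iff₀ (by positivity) hθ]
        nlinarith
      have := pow_le_pow_left₀ (by positivity) h1 r
      linarith
    exact helper_prod _ _ _ hu hv hw hwu
  · have hcb' : Q / 2 ≤ b := by linarith
    have hwv : 1 + (Q / (2 * θ)) ^ r ≤ 1 + (b / θ) ^ r := by
      have h1 : Q / (2 * θ) ≤ b / θ := by
        rw [div_le_div_iff₀ (by positivity) hθ]
        nlinarith
      have := pow_le_pow_left₀ (by positivity) h1 r
      linarith
    calc (1 + (a / θ) ^ r)⁻¹ * (1 + (b / θ) ^ r)⁻¹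
        = (1 + (b / θ) ^ r)⁻¹ * (1 + (a / θ) ^ r)⁻¹ := by ring
      _ ≤ (Real.sqrt (1 + (Q / (2 * θ)) ^ r))⁻¹ *
          ((Real.sqrt (1 + (b / θ) ^ r))⁻¹ + (Real.sqrt (1 + (a / θ) ^ r))⁻¹) :=
          helper_prod _ _ _ hv hu hw hwv
      _ = (Real.sqrt (1 + (Q / (2 * θ)) ^ r))⁻¹ *
          ((Real.sqrt (1 + (a / θ) ^ r))⁻¹ + (Real.sqrt (1 + (b / θ) ^ r))⁻¹) := by ring

lemma conv_bound (r : ℕ) (θ Q : ℝ) (hθ : 0 < θ) (hQ : 0 ≤ Q) :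
    (Real.sqrt (1 + (Q / (2 * θ)) ^ r))⁻¹
      ≤ 2 ^ r * (θ / (θ + Q)) ^ ((r : ℝ) / 2) := by
  set w : ℝ := 1 + (Q / (2 * θ)) ^ r with hwdef
  have hw1 : 1 ≤ w := by
    have : (0:ℝ) ≤ (Q / (2 * θ)) ^ r := by positivity
    rw [hwdef]; linarith
  have hw0 : (0:ℝ) < w := by linarith
  set X : ℝ := θ / (θ + Q) with hX
  have hX0 : 0 < X := by rw [hX]; positivity
  have hXr : X ^ ((r : ℝ) / 2) = Real.sqrt (X ^ r) := by
    rw [show ((r:ℝ) / 2) = (r:ℝ) * (1 / 2) by ring, Real.rpow_mul hX0.le,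
      Real.rpow_natCast, ← Real.sqrt_eq_rpow]
  -- core polynomial inequality
  have hcore : (θ + Q) ^ r ≤ 4 ^ r * θ ^ r * w := by
    have hmax : θ + Q ≤ 2 * max θ Q := by
      rcases max_cases θ Q with ⟨h1, h2⟩ | ⟨h1, h2⟩ <;> rw [h1] <;> linarith
    have h1 : (θ + Q) ^ r ≤ 2 ^ r * (θ ^ r + Q ^ r) := by
      calc (θ + Q) ^ r ≤ (2 * max θ Q) ^ r :=
            pow_le_pow_left₀ (by positivity) hmax r
        _ = 2 ^ r * (max θ Q) ^ r := by rw [mul_pow]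
        _ ≤ 2 ^ r * (θ ^ r + Q ^ r) := by
            apply mul_le_mul_of_nonneg_left _ (by positivity)
            rcases max_cases θ Q with ⟨h1, _⟩ | ⟨h1, _⟩ <;> rw [h1] <;>
              [nlinarith [pow_nonneg hQ r]; nlinarith [pow_nonneg hθ.le r]]
    have h2 : θ ^ r + Q ^ r ≤ θ ^ r * (2 ^ r * w) := by
      have hQθ : Q ^ r = θ ^ r * (2 ^ r * (Q / (2 * θ)) ^ r) := by
        rw [div_pow, mul_pow]
        field_simp
      have h1r : (1:ℝ) ≤ 2 ^ r := one_le_pow₀ (by norm_num)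
      have hθr : (0:ℝ) < θ ^ r := by positivity
      rw [hwdef]
      nlinarith [pow_nonneg (by positivity : (0:ℝ) ≤ Q / (2 * θ)) r]
    calc (θ + Q) ^ r ≤ 2 ^ r * (θ ^ r + Q ^ r) := h1
      _ ≤ 2 ^ r * (θ ^ r * (2 ^ r * w)) := by
          apply mul_le_mul_of_nonneg_left h2 (by positivity)
      _ = 4 ^ r * θ ^ r * w := by
          rw [show (4:ℝ) ^ r = 2 ^ r * 2 ^ r by rw [← mul_pow]; norm_num]
          ring
  have hinv : w⁻¹ ≤ 4 ^ r * X ^ r := by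
    have hθQ : (0:ℝ) < (θ + Q) ^ r := by positivity
    rw [hX, div_pow, show (4:ℝ) ^ r * (θ ^ r / (θ + Q) ^ r) = 4 ^ r * θ ^ r / (θ + Q) ^ r by ring,
      le_div_iff₀ hθQ, inv_mul_le_iff₀ hw0]
    linarith
  calc (Real.sqrt w)⁻¹ = Real.sqrt w⁻¹ := (Real.sqrt_inv w).symm
    _ ≤ Real.sqrt (4 ^ r * X ^ r) := Real.sqrt_le_sqrt hinv
    _ = Real.sqrt (4 ^ r) * Real.sqrt (X ^ r) := Real.sqrt_mul (by positivity) _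
    _ = 2 ^ r * X ^ ((r : ℝ) / 2) := by
        rw [hXr, show ((4:ℝ) ^ r) = ((2:ℝ) ^ r) ^ 2 by rw [← pow_mul, mul_comm r 2, pow_mul]; norm_num,
          Real.sqrt_sq (by positivity)]

/-- Riemann-sum estimate for the overlap of two momentum-space bumps of
width `θ`, centered at `0` and at `q`, over the discrete Brillouin zone. -/
theorem stmt11 (r : ℕ) (hr : 3 ≤ r) :
    ∃ C > 0, ∀ (θ : ℝ) (L₁ : ℕ), 0 < θ → θ ≤ 1 → 1 ≤ L₁ → 1 ≤ θ * (L₁ : ℝ) → ∀ q : ℝ,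
      (1 / (θ * (L₁ : ℝ))) *
          ∑ j ∈ Finset.range L₁,
            (1 + (torusDist (2 * Real.pi * (j : ℝ) / (L₁ : ℝ)) / θ) ^ r)⁻¹ *
              (1 + (torusDist (2 * Real.pi * (j : ℝ) / (L₁ : ℝ) - q) / θ) ^ r)⁻¹ ≤
        C * (θ / (θ + torusDist q)) ^ ((r : ℝ) / 2) := by
  refine ⟨24 * 2 ^ r, by positivity, ?_⟩
  intro θ L₁ hθ hθ1 hL hθL q
  have hθL0 : (0:ℝ) < θ * (L₁:ℝ) := by linarith
  set Q : ℝ := torusDist q with hQ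
  have hQ0 : 0 ≤ Q := torusDist_nonneg q
  set w : ℝ := 1 + (Q / (2 * θ)) ^ r with hwdef
  have hsw0 : (0:ℝ) ≤ (Real.sqrt w)⁻¹ := by positivity
  -- pointwise product bound
  have hsum1 : ∑ j ∈ Finset.range L₁,
      (1 + (torusDist (2 * Real.pi * (j : ℝ) / (L₁ : ℝ)) / θ) ^ r)⁻¹ *
        (1 + (torusDist (2 * Real.pi * (j : ℝ) / (L₁ : ℝ) - q) / θ) ^ r)⁻¹
      ≤ ∑ j ∈ Finset.range L₁, (Real.sqrt w)⁻¹ *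
          ((Real.sqrt (1 + (torusDist (2 * Real.pi * (j : ℝ) / (L₁ : ℝ)) / θ) ^ r))⁻¹ +
            (Real.sqrt (1 + (torusDist (2 * Real.pi * (j : ℝ) / (L₁ : ℝ) - q) / θ) ^ r))⁻¹) := by
    apply Finset.sum_le_sum
    intro j _
    exact prod_bound r θ _ _ Q hθ (torusDist_nonneg _) (torusDist_nonneg _) hQ0
      (torusDist_triangle (2 * Real.pi * (j : ℝ) / (L₁ : ℝ)) q)
  have hS1 : ∑ j ∈ Finset.range L₁,
      (Real.sqrt (1 + (torusDist (2 * Real.pi * (j : ℝ) / (L₁ : ℝ)) / θ) ^ r))⁻¹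
      ≤ 12 * (θ * (L₁:ℝ)) := by
    have h := sum_bump r hr θ L₁ hθ hθ1 hL hθL 0
    simp only [sub_zero] at h
    exact h
  have hS2 : ∑ j ∈ Finset.range L₁,
      (Real.sqrt (1 + (torusDist (2 * Real.pi * (j : ℝ) / (L₁ : ℝ) - q) / θ) ^ r))⁻¹
      ≤ 12 * (θ * (L₁:ℝ)) := sum_bump r hr θ L₁ hθ hθ1 hL hθL q
  have hsplit : ∑ j ∈ Finset.range L₁, (Real.sqrt w)⁻¹ *
        ((Real.sqrt (1 + (torusDist (2 * Real.pi * (j : ℝ) / (L₁ : ℝ)) / θ) ^ r))⁻¹ +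
          (Real.sqrt (1 + (torusDist (2 * Real.pi * (j : ℝ) / (L₁ : ℝ) - q) / θ) ^ r))⁻¹)
      = (Real.sqrt w)⁻¹ *
        ((∑ j ∈ Finset.range L₁,
            (Real.sqrt (1 + (torusDist (2 * Real.pi * (j : ℝ) / (L₁ : ℝ)) / θ) ^ r))⁻¹) +
          ∑ j ∈ Finset.range L₁,
            (Real.sqrt (1 + (torusDist (2 * Real.pi * (j : ℝ) / (L₁ : ℝ) - q) / θ) ^ r))⁻¹) := by
    rw [← Finset.mul_sum, Finset.sum_add_distrib]
  have htot : ∑ j ∈ Finset.range L₁,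
      (1 + (torusDist (2 * Real.pi * (j : ℝ) / (L₁ : ℝ)) / θ) ^ r)⁻¹ *
        (1 + (torusDist (2 * Real.pi * (j : ℝ) / (L₁ : ℝ) - q) / θ) ^ r)⁻¹
      ≤ (Real.sqrt w)⁻¹ * (24 * (θ * (L₁:ℝ))) := by
    refine hsum1.trans ?_
    rw [hsplit]
    apply mul_le_mul_of_nonneg_left _ hsw0
    linarith
  have hconv : (Real.sqrt w)⁻¹ ≤ 2 ^ r * (θ / (θ + Q)) ^ ((r : ℝ) / 2) :=
    conv_bound r θ Q hθ hQ0
  have hXpos : (0:ℝ) ≤ (θ / (θ + Q)) ^ ((r : ℝ) / 2) := by positivity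
  calc (1 / (θ * (L₁ : ℝ))) *
        ∑ j ∈ Finset.range L₁,
          (1 + (torusDist (2 * Real.pi * (j : ℝ) / (L₁ : ℝ)) / θ) ^ r)⁻¹ *
            (1 + (torusDist (2 * Real.pi * (j : ℝ) / (L₁ : ℝ) - q) / θ) ^ r)⁻¹
      ≤ (1 / (θ * (L₁ : ℝ))) * ((Real.sqrt w)⁻¹ * (24 * (θ * (L₁:ℝ)))) :=
        mul_le_mul_of_nonneg_left htot (by positivity)
    _ = 24 * (Real.sqrt w)⁻¹ := by field_simp
    _ ≤ 24 * (2 ^ r * (θ / (θ + Q)) ^ ((r : ℝ) / 2)) := by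
        apply mul_le_mul_of_nonneg_left hconv (by norm_num)
    _ = 24 * 2 ^ r * (θ / (θ + Q)) ^ ((r : ℝ) / 2) := by ring

end
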